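/- Let Γ ⊆ ℝ^m be a convex set invariant under all permutations of the coordinates, and let f : Γ → ℝ be a symmetric concave function (invariant under permutations of the coordinates). Then the set S := {A ∈ Sym_m : λ(A) ∈ Γ} is convex, and the function F : S → ℝ defined by F(A) := f(λ(A)) is concave on S. -/

import Mathlib

open Filter Topology Matrix

attribute [local instance] Matrix.normedAddCommGroup Matrix.normedSpace

/-- The real vector space `Sym_m` of symmetric `m × m` real matrices, as a submodule of
the space of all `m × m` real matrices. -/
def SymMat (m : ℕ) : Submodule ℝ (Matrix (Fin m) (Fin m) ℝ) where
  carrier := {A | A.IsSymm}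
  add_mem' := fun {A B} hA hB => by
    simp only [Set.mem_setOf_eq, Matrix.IsSymm, Matrix.transpose_add] at *
    rw [hA, hB]
  zero_mem' := by simp [Matrix.IsSymm]
  smul_mem' := fun c A hA => by
    simp only [Set.mem_setOf_eq, Matrix.IsSymm, Matrix.transpose_smul] at *
    rw [hA]

/-- A real symmetric matrix is Hermitian. -/
theorem IsSymm.isHermitianR {m : ℕ} {A : Matrix (Fin m) (Fin m) ℝ} (hA : A.IsSymm) :
    A.IsHermitian := by
  rw [Matrix.IsHermitian, Matrix.conjTranspose_eq_transpose_of_trivial]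
  exact hA

/-- The eigenvalue vector `λ(A) ∈ ℝ^m` of a symmetric matrix `A ∈ Sym_m` (the eigenvalues
repeated according to multiplicity). -/
noncomputable def eigVec {m : ℕ} (A : SymMat m) : Fin m → ℝ :=
  (IsSymm.isHermitianR A.2).eigenvalues

/-- The `i`-th partial derivative `fᵢ(x) = ∂f/∂λᵢ(x)`. -/
noncomputable def pd {m : ℕ} (f : (Fin m → ℝ) → ℝ) (x : Fin m → ℝ) (i : Fin m) : ℝ :=
  fderiv ℝ f x (Pi.single i 1)

/-- The second partial derivative `∂²f/∂λᵢ∂λⱼ(x)`. -/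
noncomputable def pd2 {m : ℕ} (f : (Fin m → ℝ) → ℝ) (x : Fin m → ℝ) (i j : Fin m) : ℝ :=
  fderiv ℝ (fun y => fderiv ℝ f y (Pi.single j 1)) x (Pi.single i 1)

lemma perm_mulVec {m : ℕ} (σ : Equiv.Perm (Fin m)) (x : Fin m → ℝ) :
    σ.permMatrix ℝ *ᵥ x = x ∘ σ := by
  ext i
  exact congrFun (Matrix.permMatrix_mulVec σ (v := x)) i

/-- The diagonal of `star U * A * U` for unitary `U` lies in the convex hull of the
permutations of the eigenvalue vector of the Hermitian matrix `A`. -/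
lemma diag_conj_mem {m : ℕ} {A : Matrix (Fin m) (Fin m) ℝ} (hA : A.IsHermitian)
    {U : Matrix (Fin m) (Fin m) ℝ} (hU : U ∈ Matrix.unitaryGroup (Fin m) ℝ) :
    (fun i => (star U * A * U) i i) ∈
      convexHull ℝ (Set.range fun π : Equiv.Perm (Fin m) => hA.eigenvalues ∘ π) := by
  set V : Matrix (Fin m) (Fin m) ℝ := (hA.eigenvectorUnitary : Matrix (Fin m) (Fin m) ℝ)
  have hV : V ∈ Matrix.unitaryGroup (Fin m) ℝ := hA.eigenvectorUnitary.2
  set R : Matrix (Fin m) (Fin m) ℝ := star U * V with hRdef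
  have hR : R ∈ Matrix.unitaryGroup (Fin m) ℝ :=
    Submonoid.mul_mem _ ((Unitary.star_mem_iff).mpr hU) hV
  have hRl : star R * R = 1 := Matrix.mem_unitaryGroup_iff'.mp hR
  have hRr : R * star R = 1 := Matrix.mem_unitaryGroup_iff.mp hR
  have hAeq : A = V * diagonal hA.eigenvalues * star V := by
    have := hA.spectral_theorem
    simpa using this
  have key : (fun i => (star U * A * U) i i) =
      (Matrix.of fun i j => R i j ^ 2) *ᵥ hA.eigenvalues := by
    funext i
    have h1 : star U * A * U = R * diagonal hA.eigenvalues * star R := by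
      conv_lhs => rw [hAeq]
      simp only [hRdef, StarMul.star_mul, star_star, Matrix.mul_assoc]
    rw [h1]
    simp [Matrix.mul_apply, Matrix.diagonal, Matrix.mulVec, dotProduct,
      Finset.mul_sum, Matrix.star_apply, sq]
    apply Finset.sum_congr rfl
    intro j _
    simp [Finset.sum_ite_eq, mul_comm]
    ring
  rw [key]
  have hD : (Matrix.of fun i j => R i j ^ 2) ∈ doublyStochastic ℝ (Fin m) := by
    rw [mem_doublyStochastic_iff_sum]
    refine ⟨fun i j => sq_nonneg _, fun i => ?_, fun j => ?_⟩
    · have h := congrFun (congrFun hRr i) i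
      simpa [Matrix.mul_apply, Matrix.star_apply, sq, Matrix.one_apply] using h
    · have h := congrFun (congrFun hRl j) j
      simpa [Matrix.mul_apply, Matrix.star_apply, sq, Matrix.one_apply] using h
  have hDhull : (Matrix.of fun i j => R i j ^ 2) ∈
      convexHull ℝ {M | ∃ σ : Equiv.Perm (Fin m), σ.permMatrix ℝ = M} := by
    rw [← doublyStochastic_eq_convexHull_permMatrix]
    exact hD
  let L : Matrix (Fin m) (Fin m) ℝ →ₗ[ℝ] (Fin m → ℝ) :=
    { toFun := fun M => M *ᵥ hA.eigenvalues
      map_add' := fun M N => Matrix.add_mulVec M N hA.eigenvalues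
      map_smul' := fun c M => by simp [Matrix.smul_mulVec] }
  have himg := Set.mem_image_of_mem L hDhull
  rw [L.image_convexHull] at himg
  refine convexHull_mono ?_ himg
  rintro x ⟨M, ⟨σ, rfl⟩, rfl⟩
  exact ⟨σ, (perm_mulVec σ hA.eigenvalues).symm⟩

/-- if `Γ ⊆ ℝ^m` is convex and permutation-invariant and `f : Γ → ℝ` is a
symmetric concave function, then `S = {A ∈ Sym_m : λ(A) ∈ Γ}` is convex and
`F(A) = f(λ(A))` is concave on `S`. -/
theorem stmt_14 (m : ℕ) (hm : 2 ≤ m)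
    (Γ : Set (Fin m → ℝ)) (hΓconv : Convex ℝ Γ)
    (hΓperm : ∀ π : Equiv.Perm (Fin m), ∀ x ∈ Γ, x ∘ π ∈ Γ)
    (f : (Fin m → ℝ) → ℝ)
    (hfsymm : ∀ π : Equiv.Perm (Fin m), ∀ x ∈ Γ, f (x ∘ π) = f x)
    (hfconc : ConcaveOn ℝ Γ f) :
    Convex ℝ {A : SymMat m | eigVec A ∈ Γ} ∧
    ConcaveOn ℝ {A : SymMat m | eigVec A ∈ Γ} (fun A => f (eigVec A)) := by
  classical
  -- the key property of the diagonal in any orthonormal basis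
  have main : ∀ (A : SymMat m), eigVec A ∈ Γ →
      ∀ (Q : Matrix (Fin m) (Fin m) ℝ), Q ∈ Matrix.unitaryGroup (Fin m) ℝ →
      (fun i => (star Q * (A : Matrix (Fin m) (Fin m) ℝ) * Q) i i) ∈ Γ ∧
      f (eigVec A) ≤ f (fun i => (star Q * (A : Matrix (Fin m) (Fin m) ℝ) * Q) i i) := by
    intro A hAΓ Q hQ
    have hA := IsSymm.isHermitianR A.2
    have hmem := diag_conj_mem hA hQ
    have hsub : (Set.range fun π : Equiv.Perm (Fin m) => hA.eigenvalues ∘ π) ⊆ Γ := by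
      rintro x ⟨π, rfl⟩
      exact hΓperm π _ hAΓ
    have he : hA.eigenvalues = eigVec A := rfl
    rw [he] at hmem hsub
    refine ⟨convexHull_min hsub hΓconv hmem, ?_⟩
    obtain ⟨y, ⟨π, rfl⟩, hy⟩ := hfconc.exists_le_of_mem_convexHull hsub hmem
    rwa [hfsymm π _ hAΓ] at hy
  -- the eigenvalue vector of a convex combination
  have comb : ∀ (A B : SymMat m) (a b : ℝ), 0 ≤ a → 0 ≤ b → a + b = 1 →
      ∃ Q ∈ Matrix.unitaryGroup (Fin m) ℝ,
        eigVec (a • A + b • B) =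
          a • (fun i => (star Q * (A : Matrix (Fin m) (Fin m) ℝ) * Q) i i) +
          b • (fun i => (star Q * (B : Matrix (Fin m) (Fin m) ℝ) * Q) i i) := by
    intro A B a b ha hb hab
    set C := a • A + b • B with hCdef
    have hC := IsSymm.isHermitianR C.2
    obtain ⟨Q, hQmem, hdiag⟩ : ∃ Q ∈ Matrix.unitaryGroup (Fin m) ℝ,
        star Q * (C : Matrix (Fin m) (Fin m) ℝ) * Q = diagonal (eigVec C) := by
      refine ⟨(hC.eigenvectorUnitary : Matrix (Fin m) (Fin m) ℝ), hC.eigenvectorUnitary.2, ?_⟩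
      have := hC.conjStarAlgAut_star_eigenvectorUnitary
      simpa [eigVec, Unitary.conjStarAlgAut_star_apply] using this
    refine ⟨Q, hQmem, ?_⟩
    have hCcoe : (C : Matrix (Fin m) (Fin m) ℝ) =
        a • (A : Matrix (Fin m) (Fin m) ℝ) + b • (B : Matrix (Fin m) (Fin m) ℝ) := by
      simp [hCdef]
    have hmat : star Q * (C : Matrix (Fin m) (Fin m) ℝ) * Q =
        a • (star Q * (A : Matrix (Fin m) (Fin m) ℝ) * Q) +
        b • (star Q * (B : Matrix (Fin m) (Fin m) ℝ) * Q) := by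
      rw [hCcoe]
      simp [Matrix.mul_add, Matrix.add_mul, Matrix.mul_smul, Matrix.smul_mul]
    funext i
    have h1 : eigVec C i = (star Q * (C : Matrix (Fin m) (Fin m) ℝ) * Q) i i := by
      rw [hdiag]; simp
    rw [h1, hmat]
    simp
  constructor
  · intro A hA B hB a b ha hb hab
    obtain ⟨Q, hQ, hEq⟩ := comb A B a b ha hb hab
    show eigVec (a • A + b • B) ∈ Γ
    rw [hEq]
    exact hΓconv ((main A hA Q hQ).1) ((main B hB Q hQ).1) ha hb hab
  · refine ⟨?_, ?_⟩
    · intro A hA B hB a b ha hb hab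
      obtain ⟨Q, hQ, hEq⟩ := comb A B a b ha hb hab
      show eigVec (a • A + b • B) ∈ Γ
      rw [hEq]
      exact hΓconv ((main A hA Q hQ).1) ((main B hB Q hQ).1) ha hb hab
    · intro A hA B hB a b ha hb hab
      obtain ⟨Q, hQ, hEq⟩ := comb A B a b ha hb hab
      have h1 := (main A hA Q hQ).2
      have h2 := (main B hB Q hQ).2
      have h3 := hfconc.2 ((main A hA Q hQ).1) ((main B hB Q hQ).1) ha hb hab
      calc a • f (eigVec A) + b • f (eigVec B)
          ≤ a • f (fun i => (star Q * (A : Matrix (Fin m) (Fin m) ℝ) * Q) i i) +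
            b • f (fun i => (star Q * (B : Matrix (Fin m) (Fin m) ℝ) * Q) i i) := by
            gcongr
        _ ≤ f (a • (fun i => (star Q * (A : Matrix (Fin m) (Fin m) ℝ) * Q) i i) +
              b • (fun i => (star Q * (B : Matrix (Fin m) (Fin m) ℝ) * Q) i i)) := h3
        _ = f (eigVec (a • A + b • B)) := by rw [hEq]
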